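/- The canonical relational model for LPC⁺_CS is an LPC⁺_CS-model, i.e., it satisfies all seven model conditions (C1)–(C7). -/

import Mathlib

namespace LPCplus

/-- Justification terms: constants, variables, application, sum, proof checker. -/
inductive Tm : Type
  | const : ℕ → Tm
  | var   : ℕ → Tm
  | app   : Tm → Tm → Tm
  | sum   : Tm → Tm → Tm
  | bang  : Tm → Tm
  deriving DecidableEq

/-- Formulas of LPC⁺. -/
inductive Fm : Type
  | atom : ℕ → Fm
  | neg  : Fm → Fm
  | and  : Fm → Fm → Fm
  | imp  : Fm → Fm → Fm
  | cond : Fm → Fm → Fm   -- the counterfactual conditional `>`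
  | box  : Tm → Fm → Fm   -- justification assertion `[t]φ`
  deriving DecidableEq

/-- A classical propositional tautology in the language of LPC⁺: true under every
boolean valuation of formulas that respects the classical connectives ¬, ∧, ⊃. -/
def IsTaut (φ : Fm) : Prop :=
  ∀ v : Fm → Bool,
    (∀ ψ, v (Fm.neg ψ) = !(v ψ)) →
    (∀ ψ χ, v (Fm.and ψ χ) = (v ψ && v χ)) →
    (∀ ψ χ, v (Fm.imp ψ χ) = (!(v ψ) || v χ)) →
    v φ = true

/-- Axioms of LPC⁺. -/
inductive Ax : Fm → Prop
  | taut (φ : Fm) : IsTaut φ → Ax φ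
  | a2 (φ ψ χ : Fm) : Ax ((φ.cond (ψ.imp χ)).imp ((φ.cond ψ).imp (φ.cond χ)))
  | a3 (φ : Fm) : Ax (φ.cond φ)
  | a4 (φ ψ : Fm) : Ax ((φ.cond ψ).imp (φ.imp ψ))
  | a5 (s t : Tm) (φ ψ : Fm) :
      Ax (((Fm.box s (φ.cond ψ)).and (Fm.box t φ)).cond (Fm.box (s.app t) ψ))
  | a6 (s t : Tm) (φ : Fm) : Ax ((Fm.box s φ).cond (Fm.box (s.sum t) φ))
  | a7 (s t : Tm) (φ : Fm) : Ax ((Fm.box t φ).cond (Fm.box (s.sum t) φ))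
  | a8 (t : Tm) (φ : Fm) : Ax ((Fm.box t φ).cond φ)
  | a9 (t : Tm) (φ : Fm) : Ax ((Fm.box t φ).cond (Fm.box t.bang (Fm.box t φ)))

/-- A constant specification: a set of formulas `[c]φ` with `φ` an axiom instance. -/
def IsCS (CS : Set Fm) : Prop :=
  ∀ χ ∈ CS, ∃ (c : ℕ) (φ : Fm), χ = Fm.box (Tm.const c) φ ∧ Ax φ

/-- Derivability in LPC⁺_CS. -/
inductive Prv (CS : Set Fm) : Fm → Prop
  | ax  {φ} : Ax φ → Prv CS φ
  | cs  {φ} : φ ∈ CS → Prv CS φ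
  | mp  {φ ψ} : Prv CS (φ.imp ψ) → Prv CS φ → Prv CS ψ
  | rcn (φ : Fm) {ψ} : Prv CS ψ → Prv CS (φ.cond ψ)

/-- ⊥ := φ ∧ ¬φ (a fixed instance). -/
def botF : Fm := (Fm.atom 0).and (Fm.neg (Fm.atom 0))

/-- ⊤ := ¬⊥. -/
def topF : Fm := Fm.neg botF

/-- Conjunction ψ₁ ∧ ⋯ ∧ ψₙ of a list (⊤ for the empty list). -/
def listConj : List Fm → Fm
  | [] => topF
  | ψ :: l => l.foldl Fm.and ψ

/-- T ⊢_{LPC⁺_CS} φ iff ⊢_{LPC⁺_CS} (ψ₁ ∧ ⋯ ∧ ψₙ) ⊃ φ for some ψ₁,…,ψₙ ∈ T. -/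
def Deriv (CS : Set Fm) (T : Set Fm) (φ : Fm) : Prop :=
  ∃ l : List Fm, (∀ ψ ∈ l, ψ ∈ T) ∧ Prv CS ((listConj l).imp φ)

def Consis (CS : Set Fm) (T : Set Fm) : Prop := ¬ Deriv CS T botF

/-- Maximal LPC⁺_CS-consistent sets. -/
def MCS (CS : Set Fm) (Γ : Set Fm) : Prop :=
  Consis CS Γ ∧ ∀ Δ, Consis CS Δ → Γ ⊆ Δ → Δ = Γ

/-- A relational model. -/
structure Model where
  W : Type
  N : Set W
  Rf : Fm → W → W → Prop
  Rf_norm : ∀ φ w v, Rf φ w v → w ∈ N ∧ v ∈ N   -- R_φ is a relation on W_N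
  Rt : Tm → W → W → Prop
  Vn : W → Set ℕ     -- valuation at normal states (sets of atoms)
  Vf : W → Set Fm    -- valuation at non-normal states (sets of formulas)

/-- Truth at a state. -/
def Sat (M : Model) : Fm → M.W → Prop
  | .atom p, w => (w ∈ M.N ∧ p ∈ M.Vn w) ∨ (w ∉ M.N ∧ Fm.atom p ∈ M.Vf w)
  | .neg φ, w => (w ∈ M.N ∧ ¬ Sat M φ w) ∨ (w ∉ M.N ∧ Fm.neg φ ∈ M.Vf w)
  | .and φ ψ, w => (w ∈ M.N ∧ Sat M φ w ∧ Sat M ψ w) ∨ (w ∉ M.N ∧ Fm.and φ ψ ∈ M.Vf w)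
  | .imp φ ψ, w => (w ∈ M.N ∧ (Sat M φ w → Sat M ψ w)) ∨ (w ∉ M.N ∧ Fm.imp φ ψ ∈ M.Vf w)
  | .cond φ ψ, w =>
      (w ∈ M.N ∧ ∀ v, M.Rf φ w v → Sat M ψ v) ∨ (w ∉ M.N ∧ Fm.cond φ ψ ∈ M.Vf w)
  | .box t φ, w =>
      (w ∈ M.N ∧ ∀ v, M.Rt t w v → Sat M φ v) ∨ (w ∉ M.N ∧ Fm.box t φ ∈ M.Vf w)

/-- Conditions (C1)–(C7) making a relational model an LPC⁺_CS-model. -/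
def IsModel (CS : Set Fm) (M : Model) : Prop :=
  (∀ φ (w v : M.W), w ∈ M.N → M.Rf φ w v → Sat M φ v) ∧
  (∀ φ (w : M.W), w ∈ M.N → Sat M φ w → M.Rf φ w w) ∧
  (∀ (c : ℕ) φ, Fm.box (Tm.const c) φ ∈ CS →
      ∀ (w v : M.W), w ∈ M.N → M.Rt (Tm.const c) w v → Sat M φ v) ∧
  (∀ (s t : Tm) (w v : M.W), w ∈ M.N → M.Rt (s.sum t) w v → M.Rt s w v ∧ M.Rt t w v) ∧
  (∀ (s t : Tm) (w v : M.W), w ∈ M.N → M.Rt (s.app t) w v →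
      ∀ φ ψ, Sat M ((Fm.box s (φ.cond ψ)).and (Fm.box t φ)) w → Sat M ψ v) ∧
  (∀ (t : Tm) (w : M.W), w ∈ M.N → M.Rt t w w) ∧
  (∀ (t : Tm) (w v u : M.W), w ∈ M.N → M.Rt t.bang w v → M.Rt t v u → M.Rt t w u)

/-- LPC⁺_CS-validity. -/
def Valid (CS : Set Fm) (φ : Fm) : Prop :=
  ∀ M : Model, IsModel CS M → ∀ w ∈ M.N, Sat M φ w

/-- Local semantic consequence. -/
def Conseq (CS : Set Fm) (T : Set Fm) (φ : Fm) : Prop :=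
  ∀ M : Model, IsModel CS M → ∀ w ∈ M.N, (∀ ψ ∈ T, Sat M ψ w) → Sat M φ w

/-- Material equivalence φ ≡ ψ. -/
def eqv (φ ψ : Fm) : Fm := (φ.imp ψ).and (ψ.imp φ)

/-- Counterfactual biconditional φ ⇔ ψ. -/
def condEqv (φ ψ : Fm) : Fm := (φ.cond ψ).and (ψ.cond φ)

/-- Disjunction φ ∨ ψ := ¬(¬φ ∧ ¬ψ). -/
def orF (φ ψ : Fm) : Fm := Fm.neg ((Fm.neg φ).and (Fm.neg ψ))

/-- The canonical relational model for LPC⁺_CS. -/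
def canonical (CS : Set Fm) : Model where
  W := Set Fm
  N := {Γ | MCS CS Γ}
  Rf φ Γ Δ := MCS CS Γ ∧ MCS CS Δ ∧ {ψ | Fm.cond φ ψ ∈ Γ} ⊆ Δ
  Rf_norm := fun _ _ _ h => ⟨h.1, h.2.1⟩
  Rt t Γ Δ := {ψ | Fm.box t ψ ∈ Γ} ⊆ Δ
  Vn Γ := {p | Fm.atom p ∈ Γ}
  Vf Γ := Γ

end LPCplus

namespace LPCplus

variable {CS T : Set Fm} {φ ψ χ α β : Fm} {Γ Δ : Set Fm} {l : List Fm}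

lemma prv_taut (h : IsTaut φ) : Prv CS φ := Prv.ax (Ax.taut φ h)

lemma imp_trans (h1 : Prv CS (φ.imp ψ)) (h2 : Prv CS (ψ.imp χ)) : Prv CS (φ.imp χ) := by
  have t : Prv CS ((φ.imp ψ).imp ((ψ.imp χ).imp (φ.imp χ))) := prv_taut (by
    intro v hn ha hi; simp only [hi]; cases v φ <;> cases v ψ <;> cases v χ <;> rfl)
  exact Prv.mp (Prv.mp t h1) h2

lemma prv_imp_self : Prv CS (φ.imp φ) := prv_taut (by
  intro v hn ha hi; simp only [hi]; cases v φ <;> rfl)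

lemma and_left : Prv CS ((φ.and ψ).imp φ) := prv_taut (by
  intro v hn ha hi; simp only [hi, ha]; cases v φ <;> cases v ψ <;> rfl)

lemma and_right : Prv CS ((φ.and ψ).imp ψ) := prv_taut (by
  intro v hn ha hi; simp only [hi, ha]; cases v φ <;> cases v ψ <;> rfl)

lemma imp_and (h1 : Prv CS (χ.imp φ)) (h2 : Prv CS (χ.imp ψ)) :
    Prv CS (χ.imp (φ.and ψ)) := by
  have t : Prv CS ((χ.imp φ).imp ((χ.imp ψ).imp (χ.imp (φ.and ψ)))) := prv_taut (by
    intro v hn ha hi; simp only [hi, ha]; cases v φ <;> cases v ψ <;> cases v χ <;> rfl)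
  exact Prv.mp (Prv.mp t h1) h2

lemma prv_top : Prv CS topF := prv_taut (by
  intro v hn ha hi; simp only [topF, botF, hn, ha]
  cases v (Fm.atom 0) <;> rfl)

lemma imp_top : Prv CS (χ.imp topF) := prv_taut (by
  intro v hn ha hi; simp only [topF, botF, hn, ha, hi]
  cases v (Fm.atom 0) <;> cases v χ <;> rfl)

lemma weaken (h : Prv CS φ) : Prv CS (ψ.imp φ) := by
  have t : Prv CS (φ.imp (ψ.imp φ)) := prv_taut (by
    intro v hn ha hi; simp only [hi]; cases v φ <;> cases v ψ <;> rfl)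
  exact Prv.mp t h

lemma imp_mp_imp (h1 : Prv CS (χ.imp (φ.imp ψ))) (h2 : Prv CS (χ.imp φ)) :
    Prv CS (χ.imp ψ) := by
  have t : Prv CS ((χ.imp (φ.imp ψ)).imp ((χ.imp φ).imp (χ.imp ψ))) := prv_taut (by
    intro v hn ha hi; simp only [hi]; cases v φ <;> cases v ψ <;> cases v χ <;> rfl)
  exact Prv.mp (Prv.mp t h1) h2

lemma foldl_base : ∀ (l : List Fm) (b : Fm), Prv CS ((l.foldl Fm.and b).imp b)
  | [], _ => prv_imp_self
  | c :: l, b => imp_trans (foldl_base l (b.and c)) and_left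

lemma foldl_mem : ∀ (l : List Fm) (b : Fm), ψ ∈ l → Prv CS ((l.foldl Fm.and b).imp ψ)
  | c :: l, b, h => by
    rcases List.mem_cons.mp h with rfl | h
    · exact imp_trans (foldl_base l (b.and ψ)) and_right
    · exact foldl_mem l (b.and c) h

lemma listConj_mem (h : ψ ∈ l) : Prv CS ((listConj l).imp ψ) := by
  cases l with
  | nil => exact absurd h List.not_mem_nil
  | cons a l =>
    rcases List.mem_cons.mp h with rfl | h
    · exact foldl_base l ψ
    · exact foldl_mem l a h

lemma foldl_intro : ∀ (l : List Fm) (b : Fm), Prv CS (χ.imp b) →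
    (∀ ψ ∈ l, Prv CS (χ.imp ψ)) → Prv CS (χ.imp (l.foldl Fm.and b))
  | [], _, hb, _ => hb
  | c :: l, b, hb, h =>
    foldl_intro l (b.and c) (imp_and hb (h c (by simp)))
      (fun ψ hψ => h ψ (by simp [hψ]))

lemma listConj_intro (h : ∀ ψ ∈ l, Prv CS (χ.imp ψ)) : Prv CS (χ.imp (listConj l)) := by
  cases l with
  | nil => exact imp_top
  | cons a l => exact foldl_intro l a (h a (by simp)) (fun ψ hψ => h ψ (by simp [hψ]))

lemma deriv_of_prv (h : Prv CS φ) : Deriv CS T φ :=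
  ⟨[], by simp, weaken h⟩

lemma deriv_of_mem (h : φ ∈ T) : Deriv CS T φ :=
  ⟨[φ], by simpa using h, prv_imp_self⟩

lemma deriv_mono {T' : Set Fm} (hT : T ⊆ T') (h : Deriv CS T φ) : Deriv CS T' φ := by
  obtain ⟨l, hl, hp⟩ := h
  exact ⟨l, fun ψ hψ => hT (hl ψ hψ), hp⟩

lemma deriv_mp (h1 : Deriv CS T (φ.imp ψ)) (h2 : Deriv CS T φ) : Deriv CS T ψ := by
  obtain ⟨l1, hl1, hp1⟩ := h1
  obtain ⟨l2, hl2, hp2⟩ := h2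
  refine ⟨l1 ++ l2, ?_, ?_⟩
  · intro χ hχ
    rcases List.mem_append.mp hχ with h | h
    exacts [hl1 χ h, hl2 χ h]
  · have e1 : Prv CS ((listConj (l1 ++ l2)).imp (φ.imp ψ)) :=
      imp_trans (listConj_intro fun χ hχ => listConj_mem (List.mem_append_left _ hχ)) hp1
    have e2 : Prv CS ((listConj (l1 ++ l2)).imp φ) :=
      imp_trans (listConj_intro fun χ hχ => listConj_mem (List.mem_append_right _ hχ)) hp2
    exact imp_mp_imp e1 e2

lemma deduction (h : Deriv CS (insert φ T) ψ) : Deriv CS T (φ.imp ψ) := by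
  obtain ⟨l, hl, hp⟩ := h
  refine ⟨l.filter (fun χ => χ ≠ φ), ?_, ?_⟩
  · intro χ hχ
    obtain ⟨h1, h2⟩ := List.mem_filter.mp hχ
    rcases hl χ h1 with h3 | h3
    · exact absurd h3 (by simpa using h2)
    · exact h3
  · set A := listConj (l.filter (fun χ => χ ≠ φ)) with hA
    have step : Prv CS ((A.and φ).imp (listConj l)) := by
      refine listConj_intro fun χ hχ => ?_
      by_cases hc : χ = φ
      · subst hc; exact and_right
      · exact imp_trans and_left (listConj_mem (List.mem_filter.mpr ⟨hχ, by simpa using hc⟩))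
    have step2 : Prv CS ((A.and φ).imp ψ) := imp_trans step hp
    have t : Prv CS (((A.and φ).imp ψ).imp (A.imp (φ.imp ψ))) := prv_taut (by
      intro v hn ha hi; simp only [hi, ha]; cases v A <;> cases v φ <;> cases v ψ <;> rfl)
    exact Prv.mp t step2

lemma deriv_bot (h1 : Deriv CS T φ) (h2 : Deriv CS T φ.neg) : Deriv CS T botF := by
  have t : Prv CS (φ.imp (φ.neg.imp botF)) := prv_taut (by
    intro v hn ha hi; simp only [botF, hi, hn, ha]
    cases v φ <;> cases v (Fm.atom 0) <;> rfl)
  exact deriv_mp (deriv_mp (deriv_of_prv t) h1) h2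

lemma deriv_neg_of_insert (h : ¬ Consis CS (insert φ T)) : Deriv CS T φ.neg := by
  have hd : Deriv CS T (φ.imp botF) := deduction (not_not.mp h)
  have t : Prv CS ((φ.imp botF).imp φ.neg) := prv_taut (by
    intro v hn ha hi; simp only [botF, hi, hn, ha]
    cases v φ <;> cases v (Fm.atom 0) <;> rfl)
  exact deriv_mp (deriv_of_prv t) hd

lemma consis_insert_neg (h : ¬ Deriv CS T ψ) : Consis CS (insert ψ.neg T) := by
  intro hD
  have hd : Deriv CS T (ψ.neg.imp botF) := deduction hD
  have t : Prv CS ((ψ.neg.imp botF).imp ψ) := prv_taut (by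
    intro v hn ha hi; simp only [botF, hi, hn, ha]
    cases v ψ <;> cases v (Fm.atom 0) <;> rfl)
  exact h (deriv_mp (deriv_of_prv t) hd)

lemma MCS.mem_of_deriv (hΓ : MCS CS Γ) (h : Deriv CS Γ φ) : φ ∈ Γ := by
  by_contra hφ
  have hni : ¬ Consis CS (insert φ Γ) := by
    intro hc
    have heq := hΓ.2 _ hc (Set.subset_insert _ _)
    exact hφ (heq ▸ Set.mem_insert φ Γ)
  exact hΓ.1 (deriv_bot h (deriv_neg_of_insert hni))

lemma MCS.mem_of_prv (hΓ : MCS CS Γ) (h : Prv CS φ) : φ ∈ Γ :=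
  hΓ.mem_of_deriv (deriv_of_prv h)

lemma MCS.mp (hΓ : MCS CS Γ) (h : φ.imp ψ ∈ Γ) (h2 : φ ∈ Γ) : ψ ∈ Γ :=
  hΓ.mem_of_deriv (deriv_mp (deriv_of_mem h) (deriv_of_mem h2))

lemma MCS.neg_mem (hΓ : MCS CS Γ) (h : φ ∉ Γ) : φ.neg ∈ Γ := by
  have hni : ¬ Consis CS (insert φ Γ) := by
    intro hc
    have heq := hΓ.2 _ hc (Set.subset_insert _ _)
    exact h (heq ▸ Set.mem_insert φ Γ)
  exact hΓ.mem_of_deriv (deriv_neg_of_insert hni)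

lemma MCS.not_both (hΓ : MCS CS Γ) (h : φ ∈ Γ) (h2 : φ.neg ∈ Γ) : False :=
  hΓ.1 (deriv_bot (deriv_of_mem h) (deriv_of_mem h2))

lemma MCS.not_mem (hΓ : MCS CS Γ) (h : φ.neg ∈ Γ) : φ ∉ Γ :=
  fun h2 => hΓ.not_both h2 h

lemma MCS.cond_elim (hΓ : MCS CS Γ) (h : φ.cond ψ ∈ Γ) (h2 : φ ∈ Γ) : ψ ∈ Γ :=
  hΓ.mp (hΓ.mp (hΓ.mem_of_prv (Prv.ax (Ax.a4 φ ψ))) h) h2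

lemma MCS.of_prv_cond (hΓ : MCS CS Γ) (h : Prv CS (φ.cond ψ)) (h2 : φ ∈ Γ) : ψ ∈ Γ :=
  hΓ.cond_elim (hΓ.mem_of_prv h) h2

lemma MCS.cond_k (hΓ : MCS CS Γ) (h : φ.cond (α.imp β) ∈ Γ) (h2 : φ.cond α ∈ Γ) :
    φ.cond β ∈ Γ :=
  hΓ.mp (hΓ.mp (hΓ.mem_of_prv (Prv.ax (Ax.a2 φ α β))) h) h2

lemma MCS.cond_of_prv (hΓ : MCS CS Γ) (h : Prv CS ψ) : φ.cond ψ ∈ Γ :=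
  hΓ.mem_of_prv (Prv.rcn φ h)

lemma MCS.cond_and (hΓ : MCS CS Γ) (h1 : φ.cond α ∈ Γ) (h2 : φ.cond β ∈ Γ) :
    φ.cond (α.and β) ∈ Γ := by
  have t : Prv CS (α.imp (β.imp (α.and β))) := prv_taut (by
    intro v hn ha hi; simp only [hi, ha]; cases v α <;> cases v β <;> rfl)
  exact hΓ.cond_k (hΓ.cond_k (hΓ.cond_of_prv t) h1) h2

lemma MCS.cond_foldl (hΓ : MCS CS Γ) :
    ∀ (l : List Fm) (b : Fm), φ.cond b ∈ Γ → (∀ χ ∈ l, φ.cond χ ∈ Γ) →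
      φ.cond (l.foldl Fm.and b) ∈ Γ
  | [], _, hb, _ => hb
  | c :: l, b, hb, h =>
    hΓ.cond_foldl l (b.and c) (hΓ.cond_and hb (h c (by simp)))
      (fun χ hχ => h χ (by simp [hχ]))

lemma MCS.cond_listConj (hΓ : MCS CS Γ) (h : ∀ χ ∈ l, φ.cond χ ∈ Γ) :
    φ.cond (listConj l) ∈ Γ := by
  cases l with
  | nil => exact hΓ.cond_of_prv prv_top
  | cons a l => exact hΓ.cond_foldl l a (h a (by simp)) (fun χ hχ => h χ (by simp [hχ]))

lemma lindenbaum (h : Consis CS T) : ∃ Γ, T ⊆ Γ ∧ MCS CS Γ := by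
  set S : Set (Set Fm) := {Δ | T ⊆ Δ ∧ Consis CS Δ} with hS
  have hzorn := zorn_subset_nonempty S ?_ T ⟨le_refl T, h⟩
  · obtain ⟨m, hTm, hmax⟩ := hzorn
    refine ⟨m, hTm, hmax.1.2, ?_⟩
    intro Δ hΔc hmΔ
    exact Set.Subset.antisymm (hmax.2 ⟨hTm.trans hmΔ, hΔc⟩ hmΔ) hmΔ
  · intro c hcS hchain hcne
    refine ⟨⋃₀ c, ⟨?_, ?_⟩, fun s hs => Set.subset_sUnion_of_mem hs⟩
    · obtain ⟨s, hs⟩ := hcne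
      exact (hcS hs).1.trans (Set.subset_sUnion_of_mem hs)
    · rintro ⟨l, hl, hp⟩
      have key : ∀ l : List Fm, (∀ ψ ∈ l, ψ ∈ ⋃₀ c) → ∃ s ∈ c, ∀ ψ ∈ l, ψ ∈ s := by
        intro l
        induction l with
        | nil =>
          intro _
          obtain ⟨s, hs⟩ := hcne
          exact ⟨s, hs, by simp⟩
        | cons a l ih =>
          intro hmem
          obtain ⟨s, hsc, hsl⟩ := ih (fun ψ hψ => hmem ψ (by simp [hψ]))
          obtain ⟨t, htc, hat⟩ := hmem a (by simp)
          rcases eq_or_ne s t with rfl | hst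
          · exact ⟨s, hsc, fun ψ hψ => by
              rcases List.mem_cons.mp hψ with rfl | h
              exacts [hat, hsl ψ h]⟩
          · rcases hchain hsc htc hst with hsub | hsub
            · exact ⟨t, htc, fun ψ hψ => by
                rcases List.mem_cons.mp hψ with rfl | h
                exacts [hat, hsub (hsl ψ h)]⟩
            · exact ⟨s, hsc, fun ψ hψ => by
                rcases List.mem_cons.mp hψ with rfl | h
                exacts [hsub hat, hsl ψ h]⟩
      obtain ⟨s, hsc, hls⟩ := key l hl
      exact (hcS hsc).2 ⟨l, hls, hp⟩

lemma cond_existence (hΓ : MCS CS Γ) (h : Fm.cond φ ψ ∉ Γ) :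
    ∃ Δ, MCS CS Δ ∧ {χ | Fm.cond φ χ ∈ Γ} ⊆ Δ ∧ ψ ∉ Δ := by
  have hnd : ¬ Deriv CS {χ | Fm.cond φ χ ∈ Γ} ψ := by
    rintro ⟨l, hl, hp⟩
    exact h (hΓ.cond_k (hΓ.mem_of_prv (Prv.rcn φ hp)) (hΓ.cond_listConj hl))
  obtain ⟨Δ, hsub, hΔ⟩ := lindenbaum (consis_insert_neg hnd)
  exact ⟨Δ, hΔ, fun χ hχ => hsub (Set.mem_insert_of_mem _ hχ),
    fun hmem => hΔ.not_both hmem (hsub (Set.mem_insert _ _))⟩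

lemma sat_nonnormal (hΓ : ¬ MCS CS Γ) : ∀ φ, Sat (canonical CS) φ Γ ↔ φ ∈ Γ := by
  intro φ
  cases φ <;>
    exact ⟨fun h => h.elim (fun h' => absurd h'.1 hΓ) (fun h' => h'.2),
      fun h => Or.inr ⟨hΓ, h⟩⟩

lemma truth (CS : Set Fm) : ∀ (φ : Fm) (Γ : Set Fm), Sat (canonical CS) φ Γ ↔ φ ∈ Γ := by
  intro φ
  induction φ with
  | atom p =>
    intro Γ
    by_cases hΓ : MCS CS Γ
    · exact ⟨fun h => h.elim (fun h' => h'.2) (fun h' => absurd hΓ h'.1),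
        fun h => Or.inl ⟨hΓ, h⟩⟩
    · exact sat_nonnormal hΓ _
  | neg φ ih =>
    intro Γ
    by_cases hΓ : MCS CS Γ
    · constructor
      · rintro (⟨_, hs⟩ | ⟨hn, _⟩)
        · exact hΓ.neg_mem fun hm => hs ((ih Γ).mpr hm)
        · exact absurd hΓ hn
      · intro hm
        exact Or.inl ⟨hΓ, fun hs => hΓ.not_both ((ih Γ).mp hs) hm⟩
    · exact sat_nonnormal hΓ _
  | and φ ψ ihφ ihψ =>
    intro Γ
    by_cases hΓ : MCS CS Γ
    · constructor
      · rintro (⟨_, h1, h2⟩ | ⟨hn, _⟩)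
        · have t : Prv CS (φ.imp (ψ.imp (φ.and ψ))) := prv_taut (by
            intro v hn ha hi; simp only [hi, ha]; cases v φ <;> cases v ψ <;> rfl)
          exact hΓ.mp (hΓ.mp (hΓ.mem_of_prv t) ((ihφ Γ).mp h1)) ((ihψ Γ).mp h2)
        · exact absurd hΓ hn
      · intro h
        exact Or.inl ⟨hΓ, (ihφ Γ).mpr (hΓ.mp (hΓ.mem_of_prv and_left) h),
          (ihψ Γ).mpr (hΓ.mp (hΓ.mem_of_prv and_right) h)⟩
    · exact sat_nonnormal hΓ _
  | imp φ ψ ihφ ihψ =>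
    intro Γ
    by_cases hΓ : MCS CS Γ
    · constructor
      · rintro (⟨_, h⟩ | ⟨hn, _⟩)
        · by_cases hφ : φ ∈ Γ
          · have t : Prv CS (ψ.imp (φ.imp ψ)) := prv_taut (by
              intro v hn ha hi; simp only [hi]; cases v φ <;> cases v ψ <;> rfl)
            exact hΓ.mp (hΓ.mem_of_prv t) ((ihψ Γ).mp (h ((ihφ Γ).mpr hφ)))
          · have t : Prv CS (φ.neg.imp (φ.imp ψ)) := prv_taut (by
              intro v hn ha hi; simp only [hi, hn]; cases v φ <;> cases v ψ <;> rfl)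
            exact hΓ.mp (hΓ.mem_of_prv t) (hΓ.neg_mem hφ)
        · exact absurd hΓ hn
      · intro h
        exact Or.inl ⟨hΓ, fun hs => (ihψ Γ).mpr (hΓ.mp h ((ihφ Γ).mp hs))⟩
    · exact sat_nonnormal hΓ _
  | cond φ ψ ihφ ihψ =>
    intro Γ
    by_cases hΓ : MCS CS Γ
    · constructor
      · rintro (⟨_, h⟩ | ⟨hn, _⟩)
        · by_contra hmem
          obtain ⟨Δ, hΔ, hsub, hψ⟩ := cond_existence hΓ hmem
          exact hψ ((ihψ Δ).mp (h Δ ⟨hΓ, hΔ, hsub⟩))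
        · exact absurd hΓ hn
      · intro h
        exact Or.inl ⟨hΓ, fun Δ hR => (ihψ Δ).mpr (hR.2.2 h)⟩
    · exact sat_nonnormal hΓ _
  | box t φ ih =>
    intro Γ
    by_cases hΓ : MCS CS Γ
    · constructor
      · rintro (⟨_, h⟩ | ⟨hn, _⟩)
        · by_contra hmem
          exact hmem ((ih _).mp (h {χ | Fm.box t χ ∈ Γ} (fun χ hχ => hχ)))
        · exact absurd hΓ hn
      · intro h
        exact Or.inl ⟨hΓ, fun Δ hΔ => (ih Δ).mpr (hΔ h)⟩
    · exact sat_nonnormal hΓ _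

end LPCplus


open LPCplus in
/-- The canonical relational model for LPC⁺_CS is an LPC⁺_CS-model,
i.e. it satisfies the model conditions (C1)–(C7). -/
theorem stmt_7 (CS : Set Fm) (hCS : IsCS CS) :
    IsModel CS (canonical CS) := by
  refine ⟨?_, ?_, ?_, ?_, ?_, ?_, ?_⟩
  · -- C1
    rintro φ Γ Δ hΓ ⟨hΓ', hΔ, hsub⟩
    exact (truth CS φ Δ).mpr (hsub (hΓ'.mem_of_prv (Prv.ax (Ax.a3 φ))))
  · -- C2
    intro φ Γ hΓ hSat
    have hΓ' : MCS CS Γ := hΓ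
    exact ⟨hΓ', hΓ', fun ψ hψ => hΓ'.cond_elim hψ ((truth CS φ Γ).mp hSat)⟩
  · -- C3
    intro c φ hin Γ Δ hΓ hRt
    have hΓ' : MCS CS Γ := hΓ
    exact (truth CS φ Δ).mpr (hRt (hΓ'.mem_of_prv (Prv.cs hin)))
  · -- C4
    intro s t Γ Δ hΓ hRt
    have hΓ' : MCS CS Γ := hΓ
    constructor
    · intro ψ hψ
      exact hRt (hΓ'.of_prv_cond (Prv.ax (Ax.a6 s t ψ)) hψ)
    · intro ψ hψ
      exact hRt (hΓ'.of_prv_cond (Prv.ax (Ax.a7 s t ψ)) hψ)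
  · -- C5
    intro s t Γ Δ hΓ hRt φ ψ hSat
    have hΓ' : MCS CS Γ := hΓ
    have hmem := (truth CS _ Γ).mp hSat
    exact (truth CS ψ Δ).mpr (hRt (hΓ'.of_prv_cond (Prv.ax (Ax.a5 s t φ ψ)) hmem))
  · -- C6
    intro t Γ hΓ ψ hψ
    have hΓ' : MCS CS Γ := hΓ
    exact hΓ'.of_prv_cond (Prv.ax (Ax.a8 t ψ)) hψ
  · -- C7
    intro t Γ Δ u hΓ h1 h2 ψ hψ
    have hΓ' : MCS CS Γ := hΓ
    exact h2 (h1 (hΓ'.of_prv_cond (Prv.ax (Ax.a9 t ψ)) hψ))
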